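/- Let p be an odd prime, r an even positive integer, and k ≥ 0. Then p does not divide A^r_{p^k}. -/

import Mathlib

/-- The descent set of a permutation `π` of `{1,…,n}` (realized as `Equiv.Perm (Fin n)`),
as a subset of `[n-1] = {1,…,n-1}`: those positions `i` with `π_i > π_{i+1}`. -/
def descSet (n : ℕ) (π : Equiv.Perm (Fin n)) : Finset ℕ :=
  (Finset.Icc 1 (n - 1)).filter fun i =>
    ∀ (h1 : i - 1 < n) (h2 : i < n), π ⟨i, h2⟩ < π ⟨i - 1, h1⟩

/-- The descent set statistic `β_n(S)`: the number of permutations of `{1,…,n}`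
with descent set exactly `S`. -/
def descStat (n : ℕ) (S : Finset ℕ) : ℕ :=
  (Finset.univ.filter fun π : Equiv.Perm (Fin n) => descSet n π = S).card

/-- `A^r_n = Σ_{S ⊆ [n-1]} β_n(S)^r`. -/
def powSumDes (r n : ℕ) : ℕ :=
  ∑ S ∈ (Finset.Icc 1 (n - 1)).powerset, descStat n S ^ r


open Finset

lemma mem_descSet {n i : ℕ} {π : Equiv.Perm (Fin n)} (hn : i < n) (hn' : i - 1 < n) :
    i ∈ descSet n π ↔ (1 ≤ i ∧ i ≤ n - 1) ∧ π ⟨i, hn⟩ < π ⟨i - 1, hn'⟩ := by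
  simp only [descSet, mem_filter, Finset.mem_Icc]
  exact ⟨fun ⟨h, h2⟩ => ⟨h, h2 hn' hn⟩, fun ⟨h, h2⟩ => ⟨h, fun _ _ => h2⟩⟩

lemma descSet_subset {n : ℕ} (π : Equiv.Perm (Fin n)) : descSet n π ⊆ Finset.Icc 1 (n-1) :=
  Finset.filter_subset _ _

/-- permutations with descent set contained in `T` -/
def ascSet (n : ℕ) (T : Finset ℕ) : Finset (Equiv.Perm (Fin n)) :=
  Finset.univ.filter fun π => descSet n π ⊆ T

lemma ascSet_card (n : ℕ) (T : Finset ℕ) :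
    (ascSet n T).card = ∑ S ∈ T.powerset, descStat n S := by
  rw [Finset.card_eq_sum_card_fiberwise (f := descSet n) (t := T.powerset)
    (fun π hπ => by simpa [Finset.mem_powerset] using (Finset.mem_filter.mp hπ).2)]
  refine Finset.sum_congr rfl fun S hS => ?_
  rw [Finset.mem_powerset] at hS
  unfold ascSet descStat
  rw [Finset.filter_filter]
  congr 1
  ext π
  simp only [Finset.mem_filter, Finset.mem_univ, true_and]
  exact ⟨fun h => h.2, fun h => ⟨h ▸ hS, h⟩⟩

lemma descSet_one (n : ℕ) : descSet n (1 : Equiv.Perm (Fin n)) = ∅ := by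
  ext i
  simp only [Finset.notMem_empty, iff_false]
  intro hi
  have h1 : 1 ≤ i ∧ i ≤ n - 1 := Finset.mem_Icc.mp (descSet_subset _ hi)
  have hn : i < n := by omega
  have hn' : i - 1 < n := by omega
  rw [mem_descSet hn hn'] at hi
  simp only [Equiv.Perm.one_apply] at hi
  have := hi.2
  rw [Fin.mk_lt_mk] at this
  omega

lemma eq_one_of_descSet_empty {n : ℕ} {π : Equiv.Perm (Fin n)} (h : descSet n π = ∅) :
    π = 1 := by
  have hsm : StrictMono (⇑π) := by
    cases n with
    | zero => intro a b hab; exact absurd a.2 (by omega)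
    | succ m =>
      rw [Fin.strictMono_iff_lt_succ]
      intro i
      have hi1 : (i : ℕ) + 1 < m + 1 := by omega
      have hi0 : (i : ℕ) + 1 - 1 < m + 1 := by omega
      by_contra hcon
      push_neg at hcon
      have hne : π (i.succ) ≠ π (i.castSucc) := fun hh => by
        have := π.injective hh
        have : (i.succ : ℕ) = (i.castSucc : ℕ) := congrArg Fin.val this
        simp at this
      have hlt : π (i.succ) < π (i.castSucc) := lt_of_le_of_ne hcon hne
      have : ((i : ℕ) + 1) ∈ descSet (m+1) π := by
        rw [mem_descSet hi1 hi0]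
        refine ⟨⟨by omega, by omega⟩, ?_⟩
        have e1 : (⟨(i:ℕ)+1, hi1⟩ : Fin (m+1)) = i.succ := rfl
        have e2 : (⟨(i:ℕ)+1-1, hi0⟩ : Fin (m+1)) = i.castSucc := by
          apply Fin.ext; simp
        rw [e1, e2]; exact hlt
      rw [h] at this
      exact absurd this (Finset.notMem_empty _)
  have hid : ⇑π = id := by
    have h2 : StrictMono (id : Fin n → Fin n) := strictMono_id
    haveI : WellFoundedLT (Fin n) := inferInstance
    exact (@StrictMono.range_inj (Fin n) (Fin n) _ _ _ (⇑π) id hsm h2).mp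
      (by simp [Set.range_eq_univ.mpr π.surjective])
  ext x
  simp [show ⇑π = id from hid]

lemma ascSet_empty_card (n : ℕ) : (ascSet n ∅).card = 1 := by
  have : ascSet n ∅ = {1} := by
    ext π
    simp only [ascSet, Finset.mem_filter, Finset.mem_univ, true_and, Finset.mem_singleton,
      Finset.subset_empty]
    exact ⟨eq_one_of_descSet_empty, fun h => h ▸ descSet_one n⟩
  rw [this, Finset.card_singleton]


section B
variable {n : ℕ}

/-- first `t` positions -/
def Iset (n t : ℕ) : Finset (Fin n) := Finset.univ.filter fun j => (j : ℕ) < t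

lemma mem_Iset {t : ℕ} {j : Fin n} : j ∈ Iset n t ↔ (j : ℕ) < t := by
  simp [Iset]

lemma card_Iset {t : ℕ} (ht : t < n) : (Iset n t).card = t := by
  have : Iset n t = Finset.Iio ⟨t, ht⟩ := by
    ext j; simp [Iset, Fin.lt_def]
  rw [this, Fin.card_Iio]

/-- the A,B-moving permutation: order iso of A onto B and of Aᶜ onto Bᶜ -/
noncomputable def moveAB (A B : Finset (Fin n)) (hAB : A.card = B.card) : Equiv.Perm (Fin n) :=
  (Equiv.sumCompl (fun x => x ∈ A)).symm.trans
    ((Equiv.sumCongr ((A.orderIsoOfFin rfl).symm.trans (B.orderIsoOfFin hAB.symm)).toEquiv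
      ((Equiv.subtypeEquivRight (fun x => (Finset.mem_compl (s := A)).symm)).trans
        (((Aᶜ.orderIsoOfFin rfl).symm.trans
          (Bᶜ.orderIsoOfFin (by simp [Finset.card_compl, hAB]))).toEquiv.trans
          (Equiv.subtypeEquivRight (fun x => (Finset.mem_compl (s := B))))))).trans
      (Equiv.sumCompl (fun x => x ∈ B)))

lemma moveAB_apply_mem {A B : Finset (Fin n)} (hAB : A.card = B.card) {x : Fin n}
    (hx : x ∈ A) :
    moveAB A B hAB x =
      ((A.orderIsoOfFin rfl).symm.trans (B.orderIsoOfFin hAB.symm)) ⟨x, hx⟩ := by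
  simp [moveAB, Equiv.sumCompl_symm_apply_of_pos hx]

lemma moveAB_apply_not_mem {A B : Finset (Fin n)} (hAB : A.card = B.card) {x : Fin n}
    (hx : x ∉ A) :
    moveAB A B hAB x =
      ((Aᶜ.orderIsoOfFin rfl).symm.trans
        (Bᶜ.orderIsoOfFin (by simp [Finset.card_compl, hAB]))) ⟨x, by simpa using hx⟩ := by
  simp [moveAB, Equiv.sumCompl_symm_apply_of_neg hx, Equiv.subtypeEquivRight]
  rfl

lemma moveAB_mem_iff {A B : Finset (Fin n)} (hAB : A.card = B.card) (x : Fin n) :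
    moveAB A B hAB x ∈ B ↔ x ∈ A := by
  by_cases hx : x ∈ A
  · simp only [hx, iff_true, moveAB_apply_mem hAB hx]
    exact Subtype.coe_prop _
  · simp only [hx, iff_false, moveAB_apply_not_mem hAB hx]
    exact Finset.mem_compl.mp (Subtype.mem (((Aᶜ.orderIsoOfFin rfl).symm.trans
        (Bᶜ.orderIsoOfFin (by simp [Finset.card_compl, hAB]))) ⟨x, by simpa using hx⟩))

lemma moveAB_lt_iff_mem {A B : Finset (Fin n)} (hAB : A.card = B.card) {x y : Fin n}
    (hx : x ∈ A) (hy : y ∈ A) :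
    moveAB A B hAB x < moveAB A B hAB y ↔ x < y := by
  rw [moveAB_apply_mem hAB hx, moveAB_apply_mem hAB hy]
  rw [Subtype.coe_lt_coe, OrderIso.lt_iff_lt]
  exact Subtype.mk_lt_mk

lemma moveAB_lt_iff_not_mem {A B : Finset (Fin n)} (hAB : A.card = B.card) {x y : Fin n}
    (hx : x ∉ A) (hy : y ∉ A) :
    moveAB A B hAB x < moveAB A B hAB y ↔ x < y := by
  rw [moveAB_apply_not_mem hAB hx, moveAB_apply_not_mem hAB hy]
  rw [Subtype.coe_lt_coe, OrderIso.lt_iff_lt]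
  exact Subtype.mk_lt_mk

end B


section C
variable {n : ℕ}

/-- permutations with descent set ⊆ T whose set of first-t-positions values is A -/
def fiber (n : ℕ) (T : Finset ℕ) (t : ℕ) (A : Finset (Fin n)) : Finset (Equiv.Perm (Fin n)) :=
  Finset.univ.filter fun π => descSet n π ⊆ T ∧ (Iset n t).image π = A

lemma fiber_card_le {T : Finset ℕ} {t : ℕ} (ht : t ∈ T) {A B : Finset (Fin n)}
    (hAB : A.card = B.card) :
    (fiber n T t A).card ≤ (fiber n T t B).card := by
  set ρ := moveAB A B hAB with hρ
  apply Finset.card_le_card_of_injOn (fun π => ρ * π)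
  · intro π hπ
    simp only [fiber, Finset.mem_coe, Finset.mem_filter, Finset.mem_univ, true_and] at hπ ⊢
    obtain ⟨hdes, himg⟩ := hπ
    have hval_mem : ∀ (j : Fin n), j ∈ Iset n t → π j ∈ A := by
      intro j hj
      rw [← himg]
      exact Finset.mem_image_of_mem _ hj
    have hval_not_mem : ∀ (j : Fin n), j ∉ Iset n t → π j ∉ A := by
      intro j hj hmem
      rw [← himg, Finset.mem_image] at hmem
      obtain ⟨j', hj', hjj⟩ := hmem
      exact hj (π.injective hjj ▸ hj')
    constructor
    · -- descent set of ρ * π still ⊆ T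
      intro i hi
      have hIcc : 1 ≤ i ∧ i ≤ n - 1 := Finset.mem_Icc.mp (descSet_subset _ hi)
      have hn : i < n := by omega
      have hn' : i - 1 < n := by omega
      rw [mem_descSet hn hn'] at hi
      have hlt : ρ (π ⟨i, hn⟩) < ρ (π ⟨i - 1, hn'⟩) := by
        simpa using hi.2
      by_cases hit : i = t
      · exact hit ▸ ht
      · apply hdes
        rw [mem_descSet hn hn']
        refine ⟨hIcc, ?_⟩
        rcases lt_or_gt_of_ne hit with hlt2 | hgt
        · -- both positions < t, values in A
          have m1 : π ⟨i, hn⟩ ∈ A := hval_mem _ (mem_Iset.mpr (by simpa using hlt2))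
          have m2 : π ⟨i - 1, hn'⟩ ∈ A := hval_mem _ (mem_Iset.mpr (by simp; omega))
          exact (moveAB_lt_iff_mem hAB m1 m2).mp hlt
        · -- both positions ≥ t, values not in A
          have m1 : π ⟨i, hn⟩ ∉ A := hval_not_mem _ (by rw [mem_Iset]; simp; omega)
          have m2 : π ⟨i - 1, hn'⟩ ∉ A := hval_not_mem _ (by rw [mem_Iset]; simp; omega)
          exact (moveAB_lt_iff_not_mem hAB m1 m2).mp hlt
    · -- image condition
      have : (Iset n t).image (⇑(ρ * π)) = ((Iset n t).image ⇑π).image ⇑ρ := by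
        rw [Finset.image_image]; rfl
      rw [this, himg]
      apply Finset.eq_of_subset_of_card_le
      · intro y hy
        rw [Finset.mem_image] at hy
        obtain ⟨x, hx, hxy⟩ := hy
        exact hxy ▸ (moveAB_mem_iff hAB x).mpr hx
      · rw [Finset.card_image_of_injective _ ρ.injective, hAB]
  · intro π₁ _ π₂ _ h
    exact mul_left_cancel h

lemma fiber_card_eq {T : Finset ℕ} {t : ℕ} (ht : t ∈ T) {A B : Finset (Fin n)}
    (hAB : A.card = B.card) :
    (fiber n T t A).card = (fiber n T t B).card :=
  le_antisymm (fiber_card_le ht hAB) (fiber_card_le ht hAB.symm)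

lemma ascSet_card_eq_choose_mul {T : Finset ℕ} (hT : T ⊆ Finset.Icc 1 (n-1)) {t : ℕ}
    (ht : t ∈ T) :
    (ascSet n T).card = n.choose t * (fiber n T t (Iset n t)).card := by
  have htn : 1 ≤ t ∧ t ≤ n - 1 := Finset.mem_Icc.mp (hT ht)
  have htn' : t < n := by omega
  have hcardI : (Iset n t).card = t := card_Iset htn'
  have hmap : ∀ π : Equiv.Perm (Fin n), π ∈ ascSet n T →
      (Iset n t).image ⇑π ∈ Finset.univ.powersetCard t := by
    intro σ _
    rw [Finset.mem_powersetCard_univ, Finset.card_image_of_injective _ σ.injective, hcardI]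
  rw [Finset.card_eq_sum_card_fiberwise hmap]
  have hterm : ∀ A ∈ Finset.univ.powersetCard t,
      ((ascSet n T).filter fun π : Equiv.Perm (Fin n) => (Iset n t).image ⇑π = A).card
        = (fiber n T t (Iset n t)).card := by
    intro A hA
    rw [Finset.mem_powersetCard_univ] at hA
    have : (ascSet n T).filter (fun π : Equiv.Perm (Fin n) => (Iset n t).image ⇑π = A) = fiber n T t A := by
      unfold ascSet fiber
      rw [Finset.filter_filter]
    rw [this]
    exact fiber_card_eq ht (by rw [hA, hcardI])
  rw [Finset.sum_congr rfl hterm, Finset.sum_const, Finset.card_powersetCard,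
    Finset.card_univ, Fintype.card_fin, smul_eq_mul]

end C

section D

lemma descStat_cast {p k n : ℕ} (hp : p.Prime) (hn : n = p ^ k) :
    ∀ S : Finset ℕ, S ⊆ Finset.Icc 1 (n-1) → ((descStat n S : ℕ) : ZMod p) = (-1) ^ S.card := by
  intro S
  induction S using Finset.strongInduction with
  | _ S ih =>
    intro hS
    have hsum : ((ascSet n S).card : ZMod p) = ∑ T ∈ S.powerset, ((descStat n T : ℕ) : ZMod p) := by
      rw [ascSet_card]; push_cast; rfl
    rcases Finset.eq_empty_or_nonempty S with rfl | hne
    · have h1 : (ascSet n ∅).card = descStat n ∅ := by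
        rw [ascSet_card]; simp
      have h2 := ascSet_empty_card n
      rw [h1] at h2
      rw [h2]
      simp
    · obtain ⟨t, ht⟩ := hne
      have htIcc : 1 ≤ t ∧ t ≤ n - 1 := Finset.mem_Icc.mp (hS ht)
      have hnn : 2 ≤ n := by omega
      have hdvd : p ∣ (ascSet n S).card := by
        rw [ascSet_card_eq_choose_mul hS ht]
        apply Dvd.dvd.mul_right
        rw [hn]
        exact Nat.Prime.dvd_choose_pow hp (by omega) (by omega)
      have h0 : ((ascSet n S).card : ZMod p) = 0 :=
        (ZMod.natCast_eq_zero_iff _ _).mpr hdvd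
      have hsplit : ∑ T ∈ S.powerset, ((descStat n T : ℕ) : ZMod p)
          = ((descStat n S : ℕ) : ZMod p)
            + ∑ T ∈ S.powerset.erase S, ((descStat n T : ℕ) : ZMod p) :=
        (Finset.add_sum_erase _ _ (Finset.mem_powerset_self S)).symm
      have hihsum : ∑ T ∈ S.powerset.erase S, ((descStat n T : ℕ) : ZMod p)
          = ∑ T ∈ S.powerset.erase S, ((-1 : ZMod p)) ^ T.card := by
        refine Finset.sum_congr rfl fun T hT => ?_
        have hT' := Finset.mem_erase.mp hT
        have hsub : T ⊂ S :=
          lt_of_le_of_ne (Finset.mem_powerset.mp hT'.2) hT'.1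
        exact ih T hsub (hsub.subset.trans hS)
      have hzero : ∑ T ∈ S.powerset, ((-1 : ZMod p)) ^ T.card = 0 := by
        have hint := Finset.sum_powerset_neg_one_pow_card_of_nonempty (x := S) ⟨t, ht⟩
        have : ((∑ T ∈ S.powerset, (-1 : ℤ) ^ T.card : ℤ) : ZMod p)
            = ∑ T ∈ S.powerset, ((-1 : ZMod p)) ^ T.card := by push_cast; rfl
        rw [← this, hint]; simp
      have herase : ∑ T ∈ S.powerset.erase S, ((-1 : ZMod p)) ^ T.card
          = - ((-1 : ZMod p)) ^ S.card := by
        have := (Finset.add_sum_erase _ (fun T => ((-1 : ZMod p)) ^ T.card)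
          (Finset.mem_powerset_self S)).symm
        rw [hzero] at this
        linear_combination -this
      rw [hsum, hsplit, hihsum, herase] at h0
      linear_combination h0

end D

theorem stmt7 (p r k : ℕ) (hp : p.Prime) (hodd : Odd p)
    (hr : 0 < r) (hre : Even r) :
    ¬ p ∣ powSumDes r (p ^ k) := by
  intro hdvd
  haveI := Fact.mk hp
  set n := p ^ k with hn
  have h1 : ((powSumDes r n : ℕ) : ZMod p) = 0 :=
    (ZMod.natCast_eq_zero_iff _ _).mpr hdvd
  have h2 : ((powSumDes r n : ℕ) : ZMod p)
      = ∑ S ∈ (Finset.Icc 1 (n-1)).powerset, (((descStat n S : ℕ) : ZMod p)) ^ r := by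
    unfold powSumDes
    push_cast
    rfl
  have h3 : ∀ S ∈ (Finset.Icc 1 (n-1)).powerset, (((descStat n S : ℕ) : ZMod p)) ^ r = 1 := by
    intro S hS
    rw [descStat_cast hp hn S (Finset.mem_powerset.mp hS), ← pow_mul, mul_comm, pow_mul,
      hre.neg_one_pow, one_pow]
  rw [Finset.sum_congr rfl h3, Finset.sum_const, Finset.card_powerset, Nat.card_Icc,
    nsmul_eq_mul, mul_one] at h2
  rw [h1] at h2
  have h4 : ((2 ^ (n - 1 + 1 - 1) : ℕ) : ZMod p) = 0 := h2.symm
  rw [ZMod.natCast_eq_zero_iff] at h4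
  have h5 : p ∣ 2 := hp.dvd_of_dvd_pow h4
  have : p = 2 := (Nat.prime_dvd_prime_iff_eq hp Nat.prime_two).mp h5
  rw [this] at hodd
  simp [Nat.odd_iff] at hodd
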